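/- Let Y_1, Y_2, … be mutually independent real-valued random variables, S_k = Y_1 + ⋯ + Y_k, and suppose there is an integer l ≥ 1 such that for all n ≥ 1 the random variables Y_{n+l} and Y_n are identically distributed. If h ≥ 0 satisfies E[e^{h S_l}] ≤ 1, then sup_{k≥1} E[e^{h S_k}] = max_{1≤k≤l} E[e^{h S_k}], and consequently for every u > 0: P[sup_{k≥1} S_k > u] ≤ e^{−hu} · max_{1≤k≤l} E[e^{h S_k}]. -/

import Mathlib

open MeasureTheory ProbabilityTheory

lemma aux_prod_lintegral {Ω : Type*} [MeasurableSpace Ω] {P : Measure Ω} [IsProbabilityMeasure P]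
    {g : ℕ → Ω → ENNReal} (hg : iIndepFun g P)
    (hm : ∀ i, Measurable (g i)) (s : Finset ℕ) :
    ∫⁻ ω, ∏ j ∈ s, g j ω ∂P = ∏ j ∈ s, ∫⁻ ω, g j ω ∂P := by
  classical
  induction s using Finset.induction with
  | empty => simp
  | insert i s hi ih =>
    have hind : IndepFun (fun ω => ∏ j ∈ s, g j ω) (g i) P := by
      have := hg.indepFun_finset_prod_of_notMem hm hi
      simpa [Finset.prod_fn] using this
    have key := lintegral_mul_eq_lintegral_mul_lintegral_of_indepFun
      (μ := P) (s.measurable_prod fun j _ => hm j) (hm i) hind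
    simp only [Pi.mul_apply] at key
    calc ∫⁻ ω, ∏ j ∈ insert i s, g j ω ∂P
        = ∫⁻ ω, (∏ j ∈ s, g j ω) * g i ω ∂P := by
          simp [Finset.prod_insert hi, mul_comm]
      _ = (∫⁻ ω, ∏ j ∈ s, g j ω ∂P) * ∫⁻ ω, g i ω ∂P := key
      _ = ∏ j ∈ insert i s, ∫⁻ ω, g j ω ∂P := by
          rw [ih, Finset.prod_insert hi, mul_comm]


lemma aux_indep_mul {Ω : Type*} [MeasurableSpace Ω] {P : Measure Ω} [IsProbabilityMeasure P]
    {Y : ℕ → Ω → ℝ} (hmeas : ∀ i, Measurable (Y i))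
    (hindep : iIndepFun Y P) (n : ℕ)
    {F G : Ω → ENNReal}
    (hF : Measurable[⨆ i ∈ Set.Iio n, MeasurableSpace.comap (Y i) inferInstance] F)
    (hG : Measurable[⨆ i ∈ Set.Ici n, MeasurableSpace.comap (Y i) inferInstance] G) :
    ∫⁻ ω, F ω * G ω ∂P = (∫⁻ ω, F ω ∂P) * ∫⁻ ω, G ω ∂P := by
  have h_le : ∀ i, MeasurableSpace.comap (Y i) inferInstance ≤ _ :=
    fun i => (measurable_iff_comap_le.1 (hmeas i))
  have hIndep : Indep (⨆ i ∈ Set.Iio n, MeasurableSpace.comap (Y i) inferInstance)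
      (⨆ i ∈ Set.Ici n, MeasurableSpace.comap (Y i) inferInstance) P :=
    indep_iSup_of_disjoint h_le hindep (Set.Iio_disjoint_Ici le_rfl)
  have hFun : IndepFun F G P := by
    have h1 := indep_of_indep_of_le_left hIndep (measurable_iff_comap_le.1 hF)
    exact indep_of_indep_of_le_right h1 (measurable_iff_comap_le.1 hG)
  have hle1 : (⨆ i ∈ Set.Iio n, MeasurableSpace.comap (Y i) inferInstance) ≤ _ :=
    iSup₂_le fun i _ => h_le i
  have hle2 : (⨆ i ∈ Set.Ici n, MeasurableSpace.comap (Y i) inferInstance) ≤ _ :=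
    iSup₂_le fun i _ => h_le i
  exact lintegral_mul_eq_lintegral_mul_lintegral_of_indepFun (hF.mono hle1 le_rfl)
    (hG.mono hle2 le_rfl) hFun

/-- Corollary 3, periodic model.
`Y j` stands for `Y_{j+1}` and `S k = Y_1 + ⋯ + Y_k = ∑_{j < k} Y j`.
Suppose `l ≥ 1` and `Y_{n+l}` is identically distributed with `Y_n` for all `n ≥ 1`.
If `h ≥ 0` satisfies `E[e^{h S_l}] ≤ 1`, then
`sup_{k≥1} E[e^{h S_k}] = max_{1≤k≤l} E[e^{h S_k}]`, and for every `u > 0`: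
`P[sup_{k≥1} S_k > u] ≤ e^{-h u} · max_{1≤k≤l} E[e^{h S_k}]`. -/
theorem stmt5 {Ω : Type*} [MeasurableSpace Ω] (P : Measure Ω) [IsProbabilityMeasure P]
    (Y : ℕ → Ω → ℝ)
    (hmeas : ∀ i, Measurable (Y i))
    (hindep : iIndepFun Y P)
    (S : ℕ → Ω → ℝ) (hS : ∀ k ω, S k ω = ∑ j ∈ Finset.range k, Y j ω)
    (l : ℕ) (hl : 1 ≤ l)
    (hper : ∀ n : ℕ, Measure.map (Y (n + l)) P = Measure.map (Y n) P)
    (h : ℝ) (hh : 0 ≤ h)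
    (hSl : ∫⁻ ω, ENNReal.ofReal (Real.exp (h * S l ω)) ∂P ≤ 1) :
    (⨆ k : ℕ, ∫⁻ ω, ENNReal.ofReal (Real.exp (h * S (k + 1) ω)) ∂P) =
      (⨆ k ∈ Finset.Icc 1 l, ∫⁻ ω, ENNReal.ofReal (Real.exp (h * S k ω)) ∂P) ∧
    ∀ u : ℝ, 0 < u →
      P (⋃ k : ℕ, {ω | u < S (k + 1) ω}) ≤
        ENNReal.ofReal (Real.exp (-h * u)) *
          ⨆ k ∈ Finset.Icc 1 l, ∫⁻ ω, ENNReal.ofReal (Real.exp (h * S k ω)) ∂P := by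
  classical
  set g : ℕ → Ω → ENNReal := fun j ω => ENNReal.ofReal (Real.exp (h * Y j ω)) with hg_def
  have hφ : Measurable fun x : ℝ => ENNReal.ofReal (Real.exp (h * x)) :=
    ENNReal.measurable_ofReal.comp (Real.measurable_exp.comp (measurable_id.const_mul h))
  have hgmeas : ∀ j, Measurable (g j) := fun j => hφ.comp (hmeas j)
  have hgindep : iIndepFun g P :=
    hindep.comp (fun _ x => ENNReal.ofReal (Real.exp (h * x))) (fun _ => hφ)
  set f : ℕ → ENNReal := fun j => ∫⁻ ω, g j ω ∂P with hf_def
  set a : ℕ → ENNReal := fun k => ∏ j ∈ Finset.range k, f j with ha_def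
  -- pointwise identity
  have hpoint : ∀ k ω, ENNReal.ofReal (Real.exp (h * S k ω)) = ∏ j ∈ Finset.range k, g j ω := by
    intro k ω
    rw [hS k ω, Finset.mul_sum, Real.exp_sum, ENNReal.ofReal_prod_of_nonneg
      (fun j _ => (Real.exp_pos _).le)]
  have hMa : ∀ k, ∫⁻ ω, ENNReal.ofReal (Real.exp (h * S k ω)) ∂P = a k := by
    intro k
    simp_rw [hpoint k]
    exact aux_prod_lintegral hgindep hgmeas _

  have hf_pos : ∀ j, 0 < f j := by
    intro j
    rw [hf_def]
    rw [lintegral_pos_iff_support (hgmeas j)]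
    have : Function.support (g j) = Set.univ := by
      ext ω; simp [hg_def, Function.mem_support, (Real.exp_pos _).ne', ENNReal.ofReal_pos,
        Real.exp_pos]
    rw [this]
    simp
  have hf_per : ∀ n, f (n + l) = f n := by
    intro n
    have e1 : ∀ m : ℕ, f m = ∫⁻ x, ENNReal.ofReal (Real.exp (h * x)) ∂(Measure.map (Y m) P) := by
      intro m
      rw [lintegral_map hφ (hmeas m)]
    rw [e1, e1, hper n]
  have hf_mod : ∀ n, f n = f (n % l) := by
    intro n
    induction n using Nat.strong_induction_on with
    | _ n ih =>
      by_cases hn : n < l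
      · rw [Nat.mod_eq_of_lt hn]
      · push_neg at hn
        obtain ⟨m, rfl⟩ : ∃ m, n = m + l := ⟨n - l, (Nat.sub_add_cancel hn).symm⟩
        rw [hf_per m, ih m (by omega), Nat.add_mod_right]
  have hal : a l ≤ 1 := by rw [← hMa l]; exact hSl
  have hf_top : ∀ j, f j ≠ ⊤ := by
    intro j
    rw [hf_mod j]
    set r := j % l with hr_def
    have hr : r < l := Nat.mod_lt _ (by omega)
    have hsplit : f r * ∏ i ∈ (Finset.range l).erase r, f i = a l := by
      rw [ha_def, Finset.mul_prod_erase _ _ (Finset.mem_range.2 hr)]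
    have hc : (0:ENNReal) < ∏ i ∈ (Finset.range l).erase r, f i :=
      CanonicallyOrderedAdd.prod_pos.mpr fun i _ => hf_pos i
    intro htop
    rw [htop, ENNReal.top_mul hc.ne'] at hsplit
    rw [← hsplit] at hal
    simp at hal

  have hshift : ∀ k, ∏ j ∈ Finset.range l, f (k + j) = a l := by
    intro k
    induction k with
    | zero => simp [ha_def]
    | succ k ih =>
      have h1 : (∏ j ∈ Finset.range l, f (k + 1 + j)) * f k
          = ∏ j ∈ Finset.range (l + 1), f (k + j) := by
        rw [Finset.prod_range_succ' (fun j => f (k + j)) l]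
        simp only [Nat.add_zero]
        congr 1
        apply Finset.prod_congr rfl
        intro j _
        congr 1
        omega
      rw [Finset.prod_range_succ (fun j => f (k + j)) l, hf_per k, ih] at h1
      exact (ENNReal.mul_left_inj (hf_pos k).ne' (hf_top k)).1 h1

  have ha_period : ∀ k, a (k + l) = a k * a l := by
    intro k
    rw [ha_def]
    simp only
    rw [Finset.prod_range_add, hshift k]
  set A : ENNReal := ⨆ k ∈ Finset.Icc 1 l, a k with hA_def
  have ha_le : ∀ k, 1 ≤ k → a k ≤ A := by
    intro k
    induction k using Nat.strong_induction_on with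
    | _ k ih =>
      intro hk1
      by_cases hkl : k ≤ l
      · exact le_iSup₂ (f := fun k (_ : k ∈ Finset.Icc 1 l) => a k) k
          (Finset.mem_Icc.2 ⟨hk1, hkl⟩)
      · push_neg at hkl
        obtain ⟨m, rfl⟩ : ∃ m, k = m + l := ⟨k - l, (Nat.sub_add_cancel hkl.le).symm⟩
        calc a (m + l) = a m * a l := ha_period m
          _ ≤ a m * 1 := mul_le_mul_right hal _
          _ = a m := mul_one _
          _ ≤ A := ih m (by omega) (by omega)
  have part1 : (⨆ k : ℕ, ∫⁻ ω, ENNReal.ofReal (Real.exp (h * S (k + 1) ω)) ∂P)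
      = ⨆ k ∈ Finset.Icc 1 l, ∫⁻ ω, ENNReal.ofReal (Real.exp (h * S k ω)) ∂P := by
    simp_rw [hMa]
    rw [← hA_def]
    apply le_antisymm
    · exact iSup_le fun k => ha_le (k + 1) (by omega)
    · apply iSup₂_le
      intro k hk
      obtain ⟨hk1, hkl⟩ := Finset.mem_Icc.1 hk
      obtain ⟨m, rfl⟩ : ∃ m, k = m + 1 := ⟨k - 1, by omega⟩
      exact le_iSup (fun k => a (k + 1)) m

  have hSmeas : ∀ j, Measurable (S j) := by
    intro j
    have he : S j = fun ω => ∑ i ∈ Finset.range j, Y i ω := funext fun ω => hS j ω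
    rw [he]
    exact Finset.measurable_sum _ fun i _ => hmeas i
  set eS : ℕ → Ω → ENNReal := fun m ω => ENNReal.ofReal (Real.exp (h * S m ω)) with heS_def
  have heSmeas : ∀ m, Measurable (eS m) := fun m => hφ.comp (hSmeas m)
  have haN_pos : ∀ N, a N ≠ 0 := fun N =>
    (CanonicallyOrderedAdd.prod_pos.mpr fun i _ => hf_pos i).ne'
  have haN_top : ∀ N, a N ≠ ⊤ := fun N =>
    (ENNReal.prod_lt_top fun j _ => (hf_top j).lt_top).ne
  have part2 : ∀ u : ℝ, 0 < u →
      P (⋃ k : ℕ, {ω | u < S (k + 1) ω}) ≤ ENNReal.ofReal (Real.exp (-h * u)) * A := by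
    intro u hu
    set E : ℕ → Set Ω := fun k => {ω | u < S (k + 1) ω} with hE_def
    set B : ℕ → Set Ω := fun N => ⋃ k ∈ Finset.range N, E k with hB_def
    have hBmono : Monotone B := by
      intro N M hNM
      apply Set.iUnion₂_subset
      intro k hk
      exact Set.subset_biUnion_of_mem (Finset.mem_range.2 (by
        have := Finset.mem_range.1 hk; omega))
    have hUnion : (⋃ k, E k) = ⋃ N, B N := by
      apply le_antisymm
      · apply Set.iUnion_subset
        intro k
        intro ω hω
        exact Set.mem_iUnion.2 ⟨k + 1, Set.mem_biUnion (Finset.self_mem_range_succ k) hω⟩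
      · apply Set.iUnion_subset
        intro N
        exact Set.iUnion₂_subset fun k _ => Set.subset_iUnion E k
    rw [hUnion, (hBmono.directed_le).measure_iUnion]
    apply iSup_le
    intro N
    -- first passage sets
    set C : ℕ → Set Ω := fun k => E k ∩ ⋂ j ∈ Set.Iio k, {ω | S (j + 1) ω ≤ u} with hC_def
    have hCamb : ∀ k, MeasurableSet (C k) := by
      intro k
      apply MeasurableSet.inter
      · exact measurableSet_lt measurable_const (hSmeas (k + 1))
      · exact MeasurableSet.biInter (Set.to_countable _) fun j _ =>
          measurableSet_le (hSmeas (j + 1)) measurable_const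
    have hdisj : ∀ {k k' : ℕ}, k < k' → ∀ ω, ω ∈ C k → ω ∈ C k' → False := by
      intro k k' hkk ω h1 h2
      have hle : S (k + 1) ω ≤ u := Set.mem_iInter₂.1 h2.2 k hkk
      exact absurd (h1.1 : u < S (k + 1) ω) (not_lt.2 hle)
    set q : ENNReal := ENNReal.ofReal (Real.exp (h * u)) with hq_def
    have hqpos : q ≠ 0 := (ENNReal.ofReal_pos.2 (Real.exp_pos _)).ne'
    have hqtop : q ≠ ⊤ := ENNReal.ofReal_ne_top
    -- key per-k inequality
    have hIk : ∀ k, k < N → q * a N * P (C k) ≤ A * ∫⁻ ω in C k, eS N ω ∂P := by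
      intro k hkN
      have hYm1 : ∀ i, i < k + 1 →
          Measurable[⨆ i ∈ Set.Iio (k + 1), MeasurableSpace.comap (Y i) inferInstance] (Y i) :=
        fun i hi => measurable_iff_comap_le.2
          (le_iSup₂ (f := fun i (_ : i ∈ Set.Iio (k + 1)) =>
            MeasurableSpace.comap (Y i) inferInstance) i hi)
      have hSm1 : ∀ j, j ≤ k + 1 →
          Measurable[⨆ i ∈ Set.Iio (k + 1), MeasurableSpace.comap (Y i) inferInstance] (S j) := by
        intro j hj
        have he : S j = fun ω => ∑ i ∈ Finset.range j, Y i ω := funext fun ω => hS j ω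
        rw [he]
        exact Finset.measurable_sum _ fun i hi =>
          hYm1 i (by have := Finset.mem_range.1 hi; omega)
      have hCm1 :
          MeasurableSet[⨆ i ∈ Set.Iio (k + 1), MeasurableSpace.comap (Y i) inferInstance] (C k) := by
        apply MeasurableSet.inter
        · exact measurableSet_lt measurable_const (hSm1 (k + 1) le_rfl)
        · exact MeasurableSet.biInter (Set.to_countable _) fun j hj =>
            measurableSet_le (hSm1 (j + 1) (by
              have : j < k := hj; omega)) measurable_const
      have hFm1 :
          Measurable[⨆ i ∈ Set.Iio (k + 1), MeasurableSpace.comap (Y i) inferInstance]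
            ((C k).indicator (eS (k + 1))) :=
        (hφ.comp (hSm1 (k + 1) le_rfl)).indicator hCm1
      have hGm2 :
          Measurable[⨆ i ∈ Set.Ici (k + 1), MeasurableSpace.comap (Y i) inferInstance]
            (fun ω => ∏ j ∈ Finset.Ico (k + 1) N, g j ω) := by
        apply Finset.measurable_prod
        intro j hj
        exact hφ.comp (measurable_iff_comap_le.2
          (le_iSup₂ (f := fun i (_ : i ∈ Set.Ici (k + 1)) =>
            MeasurableSpace.comap (Y i) inferInstance) j (Finset.mem_Ico.1 hj).1))
      have hkey := aux_indep_mul hmeas hindep (k + 1) hFm1 hGm2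
      have hpw : ∀ ω, (C k).indicator (eS (k + 1)) ω * (∏ j ∈ Finset.Ico (k + 1) N, g j ω)
          = (C k).indicator (eS N) ω := by
        intro ω
        by_cases hω : ω ∈ C k
        · rw [Set.indicator_of_mem hω, Set.indicator_of_mem hω, heS_def]
          simp only
          rw [hpoint, hpoint]
          exact Finset.prod_range_mul_prod_Ico _ (by omega)
        · rw [Set.indicator_of_notMem hω, Set.indicator_of_notMem hω, zero_mul]
      have hI : ∫⁻ ω in C k, eS N ω ∂P
          = (∫⁻ ω in C k, eS (k + 1) ω ∂P) * ∏ j ∈ Finset.Ico (k + 1) N, f j := by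
        rw [← lintegral_indicator (hCamb k), ← lintegral_indicator (hCamb k)]
        calc ∫⁻ ω, (C k).indicator (eS N) ω ∂P
            = ∫⁻ ω, (C k).indicator (eS (k + 1)) ω * (∏ j ∈ Finset.Ico (k + 1) N, g j ω) ∂P :=
              lintegral_congr fun ω => (hpw ω).symm
          _ = (∫⁻ ω, (C k).indicator (eS (k + 1)) ω ∂P)
                * ∫⁻ ω, ∏ j ∈ Finset.Ico (k + 1) N, g j ω ∂P := hkey
          _ = _ := by rw [aux_prod_lintegral hgindep hgmeas]
      have hMarkov : q * P (C k) ≤ ∫⁻ ω in C k, eS (k + 1) ω ∂P := by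
        rw [← setLIntegral_const (C k) q]
        apply setLIntegral_mono (heSmeas (k + 1))
        intro ω hω
        have h1 : u < S (k + 1) ω := hω.1
        exact ENNReal.ofReal_le_ofReal (Real.exp_le_exp.2
          (mul_le_mul_of_nonneg_left h1.le hh))
      have haN : a N = a (k + 1) * ∏ j ∈ Finset.Ico (k + 1) N, f j := by
        rw [ha_def]
        simp only
        rw [Finset.prod_range_mul_prod_Ico f (by omega : k + 1 ≤ N)]
      calc q * a N * P (C k)
          = (q * P (C k)) * (∏ j ∈ Finset.Ico (k + 1) N, f j) * a (k + 1) := by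
            rw [haN]; ring
        _ ≤ (∫⁻ ω in C k, eS (k + 1) ω ∂P) * (∏ j ∈ Finset.Ico (k + 1) N, f j) * A := by
            gcongr
            exact ha_le (k + 1) (by omega)
        _ = A * ∫⁻ ω in C k, eS N ω ∂P := by rw [hI]; ring
    -- sum over k
    have hsum : ∑ k ∈ Finset.range N, ∫⁻ ω in C k, eS N ω ∂P ≤ a N := by
      have e1 : ∀ k, ∫⁻ ω in C k, eS N ω ∂P = ∫⁻ ω, (C k).indicator (eS N) ω ∂P :=
        fun k => (lintegral_indicator (hCamb k) _).symm
      simp_rw [e1]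
      rw [← lintegral_finset_sum _ fun k _ => (heSmeas N).indicator (hCamb k)]
      rw [← hMa N]
      apply lintegral_mono
      intro ω
      show ∑ k ∈ Finset.range N, (C k).indicator (eS N) ω ≤ eS N ω
      by_cases hex : ∃ k ∈ Finset.range N, ω ∈ C k
      · obtain ⟨k₀, hk₀N, hk₀⟩ := hex
        rw [Finset.sum_eq_single_of_mem k₀ hk₀N]
        · rw [Set.indicator_of_mem hk₀]
        · intro k hk hne
          apply Set.indicator_of_notMem
          intro hmem
          rcases lt_or_gt_of_ne hne with hlt | hgt
          · exact hdisj hlt ω hmem hk₀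
          · exact hdisj hgt ω hk₀ hmem
      · push_neg at hex
        rw [Finset.sum_eq_zero fun k hk => Set.indicator_of_notMem (hex k hk) _]
        exact zero_le
    have hincl : B N ⊆ ⋃ k ∈ Finset.range N, C k := by
      intro ω hω
      obtain ⟨k, hkN, hk⟩ := Set.mem_iUnion₂.1 hω
      have hex : ∃ m, u < S (m + 1) ω := ⟨k, hk⟩
      have hk0N : Nat.find hex < N :=
        lt_of_le_of_lt (Nat.find_min' hex hk) (Finset.mem_range.1 hkN)
      have hmem : ω ∈ C (Nat.find hex) :=
        ⟨Nat.find_spec hex, Set.mem_iInter₂.2 fun j hj => not_lt.1 (Nat.find_min hex hj)⟩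
      exact Set.mem_biUnion (Finset.mem_range.2 hk0N) hmem
    have hPB : P (B N) ≤ ∑ k ∈ Finset.range N, P (C k) :=
      (measure_mono hincl).trans (measure_biUnion_finset_le _ _)
    have hchain : q * a N * P (B N) ≤ A * a N := by
      calc q * a N * P (B N) ≤ q * a N * ∑ k ∈ Finset.range N, P (C k) := by gcongr
        _ = ∑ k ∈ Finset.range N, q * a N * P (C k) := by rw [Finset.mul_sum]
        _ ≤ ∑ k ∈ Finset.range N, A * ∫⁻ ω in C k, eS N ω ∂P :=
            Finset.sum_le_sum fun k hk => hIk k (Finset.mem_range.1 hk)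
        _ = A * ∑ k ∈ Finset.range N, ∫⁻ ω in C k, eS N ω ∂P := by rw [Finset.mul_sum]
        _ ≤ A * a N := by gcongr
    have hqP : q * P (B N) ≤ A := by
      have h2 : (q * P (B N)) * a N ≤ A * a N := by
        calc (q * P (B N)) * a N = q * a N * P (B N) := by ring
          _ ≤ A * a N := hchain
      exact (ENNReal.mul_le_mul_iff_left (haN_pos N) (haN_top N)).1 h2
    have hfin : P (B N) ≤ ENNReal.ofReal (Real.exp (-h * u)) * A := by
      have hinv : ENNReal.ofReal (Real.exp (-h * u)) = q⁻¹ := by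
        rw [hq_def, ← ENNReal.ofReal_inv_of_pos (Real.exp_pos _), ← Real.exp_neg, neg_mul]
      rw [hinv]
      have : P (B N) ≤ A / q := (ENNReal.le_div_iff_mul_le (Or.inl hqpos) (Or.inl hqtop)).2
        (by rw [mul_comm]; exact hqP)
      rwa [ENNReal.div_eq_inv_mul] at this
    exact hfin
  refine ⟨part1, fun u hu => ?_⟩
  have h2 := part2 u hu
  simp_rw [hMa]
  rw [← hA_def]
  exact h2
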